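/- Let G be a connected chordal graph that is not complete and let C be a maximal clique of G. The following are equivalent: (i) there exists a maximal clique C' ≠ C with Sep(C) = C ∩ C' (i.e., C is a boundary clique); (ii) Sep(C) is a minimal vertex separator of G. -/

import Mathlib

namespace Chordal

variable {V : Type*} [Fintype V]

/-- A closed walk has a chord: an edge of `G` joining two support vertices that is
not an edge of the walk. -/
def HasChord (G : SimpleGraph V) {u : V} (c : G.Walk u u) : Prop :=
  ∃ v w, v ∈ c.support ∧ w ∈ c.support ∧ G.Adj v w ∧ s(v, w) ∉ c.edges

/-- A graph is chordal if every cycle of length at least 4 has a chord. -/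
def IsChordal (G : SimpleGraph V) : Prop :=
  ∀ ⦃u : V⦄ (c : G.Walk u u), c.IsCycle → 4 ≤ c.length → HasChord G c

/-- A maximal clique of `G`. -/
def IsMaxClique (G : SimpleGraph V) (s : Set V) : Prop :=
  G.IsClique s ∧ ∀ t : Set V, G.IsClique t → s ⊆ t → s = t

/-- A maximal clique of the induced subgraph `G(W)`. -/
def IsMaxCliqueOn (G : SimpleGraph V) (W s : Set V) : Prop :=
  s ⊆ W ∧ G.IsClique s ∧ ∀ t : Set V, t ⊆ W → G.IsClique t → s ⊆ t → s = t

/-- There is a walk from `u` to `w` staying inside `W` and avoiding `S`. -/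
def ReachWithin (G : SimpleGraph V) (W S : Set V) (u w : V) : Prop :=
  ∃ p : G.Walk u w, ∀ x ∈ p.support, x ∈ W ∧ x ∉ S

/-- `S` separates `u` from `w` in the induced subgraph `G(W)`. -/
def SeparatesOn (G : SimpleGraph V) (W S : Set V) (u w : V) : Prop :=
  u ∈ W ∧ w ∈ W ∧ u ∉ S ∧ w ∉ S ∧ u ≠ w ∧ ¬ ReachWithin G W S u w

/-- `S` is a minimal vertex separator of the induced subgraph `G(W)`:
for some pair `u, w` it is an inclusion-minimal set separating `u` from `w`. -/
def IsMinSeparatorOn (G : SimpleGraph V) (W S : Set V) : Prop :=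
  S ⊆ W ∧ ∃ u w, SeparatesOn G W S u w ∧ ∀ S' ⊂ S, ¬ SeparatesOn G W S' u w

/-- `S` is a minimal vertex separator of `G`. -/
def IsMinSeparator (G : SimpleGraph V) (S : Set V) : Prop :=
  IsMinSeparatorOn G Set.univ S

/-- `S` is inclusion-minimal among the minimal vertex separators of `G`. -/
def IsInclMinSeparator (G : SimpleGraph V) (S : Set V) : Prop :=
  IsMinSeparator G S ∧ ∀ S' : Set V, IsMinSeparator G S' → S' ⊆ S → S' = S

/-- `Γ` is a connected component of `G(V \ S)`. -/
def IsCompOutside (G : SimpleGraph V) (S Γ : Set V) : Prop :=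
  ∃ u, u ∉ S ∧ Γ = {w | ReachWithin G Set.univ S u w}

/-- A vertex is simplicial if its neighborhood is a clique. -/
def IsSimplicial (G : SimpleGraph V) (v : V) : Prop :=
  G.IsClique (G.neighborSet v)

/-- The simplicial component of a clique `C`: the simplicial vertices of `G` in `C`. -/
def Simp (G : SimpleGraph V) (C : Set V) : Set V :=
  {v ∈ C | IsSimplicial G v}

/-- The non-simplicial component of a clique `C`. -/
def Sep (G : SimpleGraph V) (C : Set V) : Set V :=
  C \ Simp G C

/-- `C` is a boundary clique (simply separated clique): a maximal clique such that
`Sep C = C ∩ C'` for some other maximal clique `C'`. -/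
def IsBoundaryClique (G : SimpleGraph V) (C : Set V) : Prop :=
  IsMaxClique G C ∧ ∃ C' : Set V, IsMaxClique G C' ∧ C' ≠ C ∧ Sep G C = C ∩ C'

/-- The induced subgraph on `W`, kept on the same vertex type. -/
def restrictS (G : SimpleGraph V) (W : Set V) : SimpleGraph V where
  Adj u v := G.Adj u v ∧ u ∈ W ∧ v ∈ W
  symm := ⟨fun u v ⟨h, hu, hv⟩ => ⟨h.symm, hv, hu⟩⟩
  loopless := ⟨fun u ⟨h, _, _⟩ => G.irrefl h⟩

/-- The vertex subset `A` induces a connected subgraph of `T`. -/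
def ConnOn {α : Type*} (T : SimpleGraph α) (A : Set α) : Prop :=
  A.Nonempty ∧ ∀ u ∈ A, ∀ v ∈ A, ∃ p : T.Walk u v, ∀ x ∈ p.support, x ∈ A

/-- The induced subgraph `G(W)` is complete. -/
def CompleteOn (G : SimpleGraph V) (W : Set V) : Prop :=
  ∀ u ∈ W, ∀ v ∈ W, u ≠ v → G.Adj u v

/-- A clique tree of `G`: a tree on the maximal cliques of `G` satisfying the
junction property. -/
def IsCliqueTree (G : SimpleGraph V) (T : SimpleGraph {s : Set V // IsMaxClique G s}) : Prop :=
  T.IsTree ∧ ∀ (C₁ C₂ : {s : Set V // IsMaxClique G s}) (p : T.Walk C₁ C₂), p.IsPath →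
    ∀ C₃ ∈ p.support, C₁.val ∩ C₂.val ⊆ C₃.val

/-- A leaf (endpoint) of a graph: a vertex with exactly one neighbor. -/
def IsLeaf {α : Type*} (T : SimpleGraph α) (a : α) : Prop :=
  ∃! b, T.Adj a b

/-- The union of the cliques preceding position `k` in a sequence. -/
def prefUnion {K : ℕ} (f : Fin K → Set V) (k : Fin K) : Set V :=
  {v | ∃ j, j < k ∧ v ∈ f j}

/-- A perfect sequence of the maximal cliques of the induced subgraph `G(W)`:
an enumeration of the maximal cliques of `G(W)` with the running intersection property. -/
def IsPerfectSeqOn (G : SimpleGraph V) (W : Set V) {K : ℕ} (f : Fin K → Set V) : Prop :=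
  Function.Injective f ∧ (∀ s : Set V, IsMaxCliqueOn G W s ↔ ∃ k, f k = s) ∧
  ∀ k : Fin K, 0 < (k : ℕ) →
    G.IsClique (prefUnion f k ∩ f k) ∧ ∃ k' : Fin K, k' < k ∧ prefUnion f k ∩ f k ⊆ f k'

/-- A perfect sequence of the maximal cliques of `G`. -/
def IsPerfectSeq (G : SimpleGraph V) {K : ℕ} (f : Fin K → Set V) : Prop :=
  Function.Injective f ∧ (∀ s : Set V, IsMaxClique G s ↔ ∃ k, f k = s) ∧
  ∀ k : Fin K, 0 < (k : ℕ) →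
    G.IsClique (prefUnion f k ∩ f k) ∧ ∃ k' : Fin K, k' < k ∧ prefUnion f k ∩ f k ⊆ f k'

/-- The closed neighborhood of a vertex. -/
def closedNbhd (G : SimpleGraph V) (v : V) : Set V :=
  insert v (G.neighborSet v)


section AuxLemmas

open SimpleGraph

variable {G : SimpleGraph V}

lemma reach_refl {S : Set V} {u : V} (hu : u ∉ S) : ReachWithin G Set.univ S u u :=
  ⟨SimpleGraph.Walk.nil, fun x hx => by simp at hx; exact hx ▸ ⟨trivial, hu⟩⟩

lemma reach_symm {S : Set V} {u w : V} (h : ReachWithin G Set.univ S u w) :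
    ReachWithin G Set.univ S w u := by
  obtain ⟨p, hp⟩ := h
  exact ⟨p.reverse, fun x hx => hp x (by simpa using hx)⟩

lemma reach_trans {S : Set V} {u v w : V} (h1 : ReachWithin G Set.univ S u v)
    (h2 : ReachWithin G Set.univ S v w) : ReachWithin G Set.univ S u w := by
  obtain ⟨p, hp⟩ := h1
  obtain ⟨q, hq⟩ := h2
  refine ⟨p.append q, fun x hx => ?_⟩
  rcases (SimpleGraph.Walk.mem_support_append_iff _ _).mp hx with h | h
  · exact hp x h
  · exact hq x h

lemma reach_support {S : Set V} {u w : V} (p : G.Walk u w) (hp : ∀ x ∈ p.support, x ∉ S) :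
    ∀ x ∈ p.support, ReachWithin G Set.univ S u x := by
  classical
  intro x hx
  exact ⟨p.takeUntil x hx, fun y hy => ⟨trivial, hp y (p.support_takeUntil_subset hx hy)⟩⟩

lemma exists_maxClique_superset (G : SimpleGraph V) {s : Set V} (hs : G.IsClique s) :
    ∃ t : Set V, IsMaxClique G t ∧ s ⊆ t := by
  classical
  obtain ⟨t, htF, hmax⟩ := Finset.exists_max_image
    (Finset.univ.filter fun t : Finset V => G.IsClique (t : Set V) ∧ s ⊆ (t : Set V))
    Finset.card ⟨s.toFinset, by simp [Set.coe_toFinset, hs]⟩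
  simp only [Finset.mem_filter, Finset.mem_univ, true_and] at htF hmax
  refine ⟨(t : Set V), ⟨htF.1, ?_⟩, htF.2⟩
  intro t' ht' hsub
  have hft' : ((Set.toFinite t').toFinset : Set V) = t' := Set.Finite.coe_toFinset _
  have hcard := hmax (Set.toFinite t').toFinset (by
    rw [hft']; exact ⟨ht', htF.2.trans hsub⟩)
  have hsubF : t ⊆ (Set.toFinite t').toFinset := by
    intro y hy
    rw [← Finset.mem_coe, hft']
    exact hsub hy
  have := Finset.eq_of_subset_of_card_le hsubF hcard
  rw [← hft', this]

lemma simp_nbhd {C : Set V} (hC : IsMaxClique G C) {v : V} (hv : v ∈ Simp G C) :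
    C = insert v (G.neighborSet v) := by
  apply hC.2
  · exact hv.2.insert (fun b hb _ => hb)
  · intro x hx
    rcases eq_or_ne x v with rfl | h
    · exact Set.mem_insert _ _
    · exact Set.mem_insert_of_mem _ (hC.1 hv.1 hx (fun he => h he.symm))

lemma simp_adj_mem {C : Set V} (hC : IsMaxClique G C) {v : V} (hv : v ∈ Simp G C)
    {y : V} (hy : G.Adj v y) : y ∈ C := by
  rw [simp_nbhd hC hv]
  exact Set.mem_insert_of_mem _ hy

lemma walk_stays {C : Set V} (hC : IsMaxClique G C) :
    ∀ {u w : V} (p : G.Walk u w), u ∈ Simp G C → (∀ x ∈ p.support, x ∉ Sep G C) →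
      w ∈ Simp G C := by
  intro u w p
  induction p with
  | nil => exact fun h _ => h
  | @cons a b c h q ih =>
    intro ha hs
    have hbC : b ∈ C := simp_adj_mem hC ha h
    have hbS : b ∉ Sep G C := hs b (by simp)
    have hb : b ∈ Simp G C := by
      by_contra hb
      exact hbS ⟨hbC, fun h' => hb ⟨hbC, h'.2⟩⟩
    exact ih hb (fun x hx => hs x (by simp [hx]))

end AuxLemmas
section AuxLemmas2

open SimpleGraph

variable {G : SimpleGraph V}

omit [Fintype V]

lemma edge_mem_of_length_one {u v : V} : ∀ (w : G.Walk u v), w.length = 1 → s(u, v) ∈ w.edges := by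
  intro w h
  cases w with
  | nil => simp at h
  | @cons _ c _ h' q =>
    have h0 : q.length = 0 := by simpa using h
    have hcv := SimpleGraph.Walk.eq_of_length_eq_zero h0
    subst hcv
    simp

lemma induced_of_min [DecidableEq V] {Γ : Set V} {x z : V} (q : G.Walk x z)
    (hsup : ∀ v ∈ q.support, v ∈ Γ)
    (hmin : ∀ r : G.Walk x z, (∀ v ∈ r.support, v ∈ Γ) → q.length ≤ r.length)
    {u v : V} (hu : u ∈ q.support) (hv : v ∈ q.support) (huv : G.Adj u v) :
    s(u, v) ∈ q.edges := by
  by_contra hne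
  have hsplit := q.take_spec hu
  have hvcase : v ∈ (q.takeUntil u hu).support ∨ v ∈ (q.dropUntil u hu).support := by
    have h1 : v ∈ ((q.takeUntil u hu).append (q.dropUntil u hu)).support := by
      rw [hsplit]; exact hv
    exact (SimpleGraph.Walk.mem_support_append_iff _ _).mp h1
  have hlen1 : (q.takeUntil u hu).length + (q.dropUntil u hu).length = q.length := by
    have := congrArg SimpleGraph.Walk.length hsplit
    rwa [SimpleGraph.Walk.length_append] at this
  rcases hvcase with hvt | hvd
  · -- v on the first part; shortcut v -> u
    set t1 := q.takeUntil u hu with ht1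
    set d := q.dropUntil u hu with hd
    have hlen2 : (t1.takeUntil v hvt).length + (t1.dropUntil v hvt).length = t1.length := by
      have := congrArg SimpleGraph.Walk.length (t1.take_spec hvt)
      rwa [SimpleGraph.Walk.length_append] at this
    have hge2 : 2 ≤ (t1.dropUntil v hvt).length := by
      rcases Nat.lt_or_ge (t1.dropUntil v hvt).length 2 with hlt | hge
      · interval_cases h : (t1.dropUntil v hvt).length
        · exact absurd (SimpleGraph.Walk.eq_of_length_eq_zero h) huv.ne'
        · exfalso
          apply hne
          have : s(v, u) ∈ (t1.dropUntil v hvt).edges := edge_mem_of_length_one _ h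
          have h2 : s(v, u) ∈ t1.edges := t1.edges_dropUntil_subset hvt this
          rw [Sym2.eq_swap] at h2
          exact q.edges_takeUntil_subset hu h2
      · exact hge
    set r : G.Walk x z := (t1.takeUntil v hvt).append (SimpleGraph.Walk.cons huv.symm d) with hr
    have hrΓ : ∀ y ∈ r.support, y ∈ Γ := by
      intro y hy
      rw [hr] at hy
      simp only [SimpleGraph.Walk.mem_support_append_iff,
        SimpleGraph.Walk.support_cons, List.mem_cons] at hy
      rcases hy with h1 | rfl | h1
      · exact hsup y (q.support_takeUntil_subset hu (t1.support_takeUntil_subset hvt h1))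
      · exact hsup y (q.support_takeUntil_subset hu hvt)
      · exact hsup y (q.support_dropUntil_subset hu h1)
    have hrlen : r.length < q.length := by
      have : r.length = (t1.takeUntil v hvt).length + (d.length + 1) := by
        rw [hr, SimpleGraph.Walk.length_append, SimpleGraph.Walk.length_cons]
      omega
    exact absurd (hmin r hrΓ) (by omega)
  · -- v on the second part; shortcut u -> v
    set t1 := q.takeUntil u hu with ht1
    set d := q.dropUntil u hu with hd
    have hlen2 : (d.takeUntil v hvd).length + (d.dropUntil v hvd).length = d.length := by
      have := congrArg SimpleGraph.Walk.length (d.take_spec hvd)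
      rwa [SimpleGraph.Walk.length_append] at this
    have hge2 : 2 ≤ (d.takeUntil v hvd).length := by
      rcases Nat.lt_or_ge (d.takeUntil v hvd).length 2 with hlt | hge
      · interval_cases h : (d.takeUntil v hvd).length
        · exact absurd (SimpleGraph.Walk.eq_of_length_eq_zero h) huv.ne
        · exfalso
          apply hne
          have : s(u, v) ∈ (d.takeUntil v hvd).edges := edge_mem_of_length_one _ h
          exact q.edges_dropUntil_subset hu (d.edges_takeUntil_subset hvd this)
      · exact hge
    set r : G.Walk x z := t1.append (SimpleGraph.Walk.cons huv (d.dropUntil v hvd)) with hr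
    have hrΓ : ∀ y ∈ r.support, y ∈ Γ := by
      intro y hy
      rw [hr] at hy
      simp only [SimpleGraph.Walk.mem_support_append_iff,
        SimpleGraph.Walk.support_cons, List.mem_cons] at hy
      rcases hy with h1 | rfl | h1
      · exact hsup y (q.support_takeUntil_subset hu h1)
      · exact hsup y hu
      · exact hsup y (q.support_dropUntil_subset hu (d.support_dropUntil_subset hvd h1))
    have hrlen : r.length < q.length := by
      have : r.length = t1.length + ((d.dropUntil v hvd).length + 1) := by
        rw [hr, SimpleGraph.Walk.length_append, SimpleGraph.Walk.length_cons]
      omega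
    exact absurd (hmin r hrΓ) (by omega)

end AuxLemmas2
section AuxLemmas3

open SimpleGraph

variable {G : SimpleGraph V}

omit [Fintype V]

lemma chord_induction [DecidableEq V] (hch : IsChordal G) :
    ∀ n : ℕ, ∀ {a b : V} (p : G.Walk a b), p.length = n → p.IsPath →
      ∀ {s t : V}, G.Adj s t → G.Adj t a → ¬G.Adj t b → G.Adj s b →
      s ∉ p.support → t ∉ p.support →
      (∀ v ∈ p.support, v ≠ b → ¬G.Adj s v) →
      (∀ u v, u ∈ p.support → v ∈ p.support → G.Adj u v → s(u, v) ∈ p.edges) → False := by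
  intro n
  induction n using Nat.strong_induction_on with
  | _ n ih =>
  intro a b p hlen hp s t hst hta htb hsb hsp htp hsint hind
  have hab : a ≠ b := fun h => htb (h ▸ hta)
  have hplen : 1 ≤ p.length := by
    rcases Nat.eq_zero_or_pos p.length with h | h
    · exact absurd (SimpleGraph.Walk.eq_of_length_eq_zero h) hab
    · exact h
  have hamem : a ∈ p.support := p.start_mem_support
  have hbmem : b ∈ p.support := p.end_mem_support
  have hts : t ≠ s := hst.ne'
  have hta' : t ≠ a := fun h => htp (h ▸ hamem)
  have htb' : t ≠ b := fun h => htp (h ▸ hbmem)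
  have hsa : s ≠ a := fun h => hsp (h ▸ hamem)
  have hsb' : s ≠ b := fun h => hsp (h ▸ hbmem)
  set c : G.Walk t t :=
    SimpleGraph.Walk.cons hta
      (p.append (SimpleGraph.Walk.cons hsb.symm (SimpleGraph.Walk.cons hst SimpleGraph.Walk.nil)))
    with hc
  have hcsup : c.support = t :: (p.support ++ [s, t]) := by
    rw [hc]
    simp [SimpleGraph.Walk.support_append]
  have hced : c.edges = s(t, a) :: (p.edges ++ [s(b, s), s(s, t)]) := by
    rw [hc]
    simp [SimpleGraph.Walk.edges_append]
  have hedge_t : ∀ x, s(t, x) ∉ p.edges := fun x hx =>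
    htp (p.fst_mem_support_of_mem_edges hx)
  have hedge_s : ∀ x, s(x, s) ∉ p.edges := fun x hx =>
    hsp (p.snd_mem_support_of_mem_edges hx)
  have hcyc : c.IsCycle := by
    refine ⟨⟨⟨?_⟩, ?_⟩, ?_⟩
    · -- edges nodup
      rw [hced]
      simp only [List.nodup_cons, List.mem_append, List.mem_cons, List.mem_singleton,
        List.not_mem_nil, or_false]
      refine ⟨?_, ?_⟩
      · rintro (h | h | h)
        · exact hedge_t a h
        · rw [Sym2.eq_iff] at h
          rcases h with ⟨h1, _⟩ | ⟨h1, _⟩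
          · exact htb' h1
          · exact hts h1
        · rw [Sym2.eq_iff] at h
          rcases h with ⟨h1, _⟩ | ⟨_, h2⟩
          · exact hts h1
          · exact hsa h2.symm
      · rw [List.nodup_append]
        refine ⟨hp.edges_nodup, ?_, ?_⟩
        · simp only [List.nodup_cons, List.mem_singleton, List.not_mem_nil, not_false_iff,
            List.nodup_nil, and_true, List.mem_cons, or_false]
          intro h
          rw [Sym2.eq_iff] at h
          rcases h with ⟨h1, h2⟩ | ⟨h1, h2⟩
          · exact hts h2.symm
          · exact htb' h1.symm
        · intro e he f hf
          simp only [List.mem_cons, List.mem_singleton, List.not_mem_nil, or_false] at hf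
          rcases hf with rfl | rfl <;> rintro rfl
          · exact hedge_s b he
          · exact hsp (p.fst_mem_support_of_mem_edges he)
    · -- nonempty
      rw [hc]
      intro h
      simpa using congrArg SimpleGraph.Walk.length h
    · -- support tail nodup
      rw [hcsup]
      simp only [List.tail_cons]
      rw [List.nodup_append]
      refine ⟨hp.support_nodup, by simp [hts.symm], ?_⟩
      intro y hy z hz
      simp only [List.mem_cons, List.mem_singleton, List.not_mem_nil, or_false] at hz
      rcases hz with rfl | rfl <;> rintro rfl
      · exact hsp hy
      · exact htp hy
  have hclen : 4 ≤ c.length := by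
    rw [hc]
    simp only [SimpleGraph.Walk.length_cons, SimpleGraph.Walk.length_append,
      SimpleGraph.Walk.length_nil]
    omega
  obtain ⟨v, w, hvc, hwc, hvw, hnotedge⟩ := hch c hcyc hclen
  rw [hcsup] at hvc hwc
  simp only [List.mem_cons, List.mem_append, List.mem_singleton, List.not_mem_nil, or_false]
    at hvc hwc
  -- helper handling a chord from t into the interior of p
  have key : ∀ v ∈ p.support, G.Adj t v → s(t, v) ∉ c.edges → False := by
    intro v hvp htv hne
    have hva : v ≠ a := by
      rintro rfl
      exact hne (by rw [hced]; exact List.mem_cons_self)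
    have hvb : v ≠ b := fun h => htb (h ▸ htv)
    set p2 := p.dropUntil v hvp with hp2
    set p1 := p.takeUntil v hvp with hp1
    have hlen12 : p1.length + p2.length = p.length := by
      have := congrArg SimpleGraph.Walk.length (p.take_spec hvp)
      rwa [SimpleGraph.Walk.length_append] at this
    have hp1len : p1.length ≠ 0 := fun h =>
      hva (SimpleGraph.Walk.eq_of_length_eq_zero h).symm
    have hlt : p2.length < n := by omega
    have hsubs := p.support_dropUntil_subset hvp
    have honly : ∀ y, y ∈ p1.support → y ∈ p2.support → y = v := by
      intro y hy1 hy2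
      have hsupp : p.support = p1.support ++ p2.support.tail := by
        conv_lhs => rw [← p.take_spec hvp]
        rw [SimpleGraph.Walk.support_append]
      have hnd : (p1.support ++ p2.support.tail).Nodup := hsupp ▸ hp.support_nodup
      have hdisj := List.disjoint_of_nodup_append hnd
      rw [SimpleGraph.Walk.support_eq_cons p2, List.mem_cons] at hy2
      rcases hy2 with rfl | h
      · rfl
      · exact absurd h (hdisj hy1)
    refine ih p2.length hlt p2 rfl (hp.dropUntil hvp) hst htv htb hsb
      (fun h => hsp (hsubs h)) (fun h => htp (hsubs h))
      (fun y hy hyb => hsint y (hsubs hy) hyb) ?_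
    intro u' v' hu' hv' huv'
    have he := hind u' v' (hsubs hu') (hsubs hv') huv'
    have hed : p.edges = p1.edges ++ p2.edges := by
      conv_lhs => rw [← p.take_spec hvp]
      rw [SimpleGraph.Walk.edges_append]
    rw [hed, List.mem_append] at he
    rcases he with he | he
    · exfalso
      have h1 := honly u' (p1.fst_mem_support_of_mem_edges he) hu'
      have h2 := honly v' (p1.snd_mem_support_of_mem_edges he) hv'
      exact huv'.ne (h1.trans h2.symm)
    · exact he
  -- case analysis on the chord
  rcases hvc with rfl | hvp | rfl | rfl
  · rcases hwc with rfl | hwp | rfl | rfl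
    · exact hvw.ne rfl
    · exact key w hwp hvw hnotedge
    · exact hnotedge (by rw [Sym2.eq_swap, hced]; simp)
    · exact hvw.ne rfl
  · rcases hwc with rfl | hwp | rfl | rfl
    · exact key v hvp hvw.symm (by rw [Sym2.eq_swap]; exact hnotedge)
    · exact hnotedge (by
        rw [hced]
        exact List.mem_cons_of_mem _ (List.mem_append_left _ (hind v w hvp hwp hvw)))
    · rcases eq_or_ne v b with rfl | hvb
      · exact hnotedge (by rw [hced]; simp)
      · exact hsint v hvp hvb hvw.symm
    · exact key v hvp hvw.symm (by rw [Sym2.eq_swap]; exact hnotedge)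
  · rcases hwc with rfl | hwp | rfl | rfl
    · exact hnotedge (by rw [hced]; simp)
    · rcases eq_or_ne w b with rfl | hwb
      · exact hnotedge (by rw [Sym2.eq_swap, hced]; simp)
      · exact hsint w hwp hwb hvw
    · exact hvw.ne rfl
    · exact hnotedge (by rw [hced]; simp)
  · rcases hwc with rfl | hwp | rfl | rfl
    · exact hvw.ne rfl
    · exact key w hwp hvw hnotedge
    · exact hnotedge (by rw [Sym2.eq_swap, hced]; simp)
    · exact hvw.ne rfl

end AuxLemmas3
section AuxLemmas4

open SimpleGraph

variable {G : SimpleGraph V}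

omit [Fintype V]

lemma exists_adj_all (hch : IsChordal G) {Γ : Set V} (hΓne : Γ.Nonempty)
    (hconn : ∀ z ∈ Γ, ∀ z' ∈ Γ, ∃ p : G.Walk z z', ∀ y ∈ p.support, y ∈ Γ)
    (S : Finset V) :
    G.IsClique (S : Set V) → (∀ s ∈ S, s ∉ Γ) → (∀ s ∈ S, ∃ y ∈ Γ, G.Adj s y) →
    ∃ x ∈ Γ, ∀ s ∈ S, G.Adj x s := by
  classical
  induction S using Finset.induction_on with
  | empty =>
    intro _ _ _
    obtain ⟨x, hx⟩ := hΓne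
    exact ⟨x, hx, by simp⟩
  | @insert a F haF ihF =>
    intro hcl hdisj hfull
    obtain ⟨x, hxΓ, hxF⟩ := ihF (hcl.subset (by simp [Set.subset_def]; exact fun _ h => Or.inr h))
      (fun s hs => hdisj s (Finset.mem_insert_of_mem hs))
      (fun s hs => hfull s (Finset.mem_insert_of_mem hs))
    by_cases hax : G.Adj x a
    · refine ⟨x, hxΓ, fun s hs => ?_⟩
      rcases Finset.mem_insert.mp hs with rfl | hs
      · exact hax
      · exact hxF s hs
    · have hex : ∃ n, ∃ z, ∃ q : G.Walk x z,
          (∀ v ∈ q.support, v ∈ Γ) ∧ G.Adj a z ∧ q.length = n := by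
        obtain ⟨y, hyΓ, hay⟩ := hfull a (Finset.mem_insert_self a F)
        obtain ⟨q, hq⟩ := hconn x hxΓ y hyΓ
        exact ⟨q.length, y, q, hq, hay, rfl⟩
      obtain ⟨z, q0, hq0Γ, haz, hq0len⟩ := Nat.find_spec hex
      set q := q0.bypass with hqdef
      have hqp : q.IsPath := q0.bypass_isPath
      have hqΓ : ∀ v ∈ q.support, v ∈ Γ := fun v hv => hq0Γ v (q0.support_bypass_subset hv)
      have hqlen : q.length = Nat.find hex :=
        le_antisymm (hq0len ▸ q0.length_bypass_le) (Nat.find_le ⟨z, q, hqΓ, haz, rfl⟩)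
      have hminany : ∀ z' (r : G.Walk x z'), (∀ v ∈ r.support, v ∈ Γ) → G.Adj a z' →
          q.length ≤ r.length := by
        intro z' r hr ha'
        rw [hqlen]
        exact Nat.find_le ⟨z', r, hr, ha', rfl⟩
      have hminz : ∀ r : G.Walk x z, (∀ v ∈ r.support, v ∈ Γ) → q.length ≤ r.length :=
        fun r hr => hminany z r hr haz
      have hq1 : q.length ≠ 0 := by
        intro h
        have hxz := SimpleGraph.Walk.eq_of_length_eq_zero h
        rw [← hxz] at haz
        exact hax haz.symm
      have hind : ∀ u' v', u' ∈ q.support → v' ∈ q.support → G.Adj u' v' →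
          s(u', v') ∈ q.edges := fun u' v' hu hv huv => induced_of_min q hqΓ hminz hu hv huv
      have hint : ∀ v ∈ q.support, v ≠ z → ¬G.Adj a v := by
        intro v hv hvz hav
        have hle := hminany v (q.takeUntil v hv)
          (fun y hy => hqΓ y (q.support_takeUntil_subset hv hy)) hav
        have hsplit : (q.takeUntil v hv).length + (q.dropUntil v hv).length = q.length := by
          have := congrArg SimpleGraph.Walk.length (q.take_spec hv)
          rwa [SimpleGraph.Walk.length_append] at this
        have hd0 : (q.dropUntil v hv).length ≠ 0 := fun h0 =>
          hvz (SimpleGraph.Walk.eq_of_length_eq_zero h0)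
        omega
      have hzadj : ∀ t ∈ F, G.Adj t z := by
        intro t htF
        by_contra htz
        have hat : G.Adj a t := by
          refine hcl (Finset.mem_coe.mpr (Finset.mem_insert_self a F))
            (Finset.mem_coe.mpr (Finset.mem_insert_of_mem htF)) ?_
          rintro rfl
          exact haF htF
        exact chord_induction hch q.length q rfl hqp hat ((hxF t htF).symm) htz haz
          (fun h => hdisj a (Finset.mem_insert_self a F) (hqΓ a h))
          (fun h => hdisj t (Finset.mem_insert_of_mem htF) (hqΓ t h))
          hint hind
      refine ⟨z, hqΓ z q.end_mem_support, fun s hs => ?_⟩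
      rcases Finset.mem_insert.mp hs with rfl | hs
      · exact haz.symm
      · exact (hzadj s hs).symm

end AuxLemmas4
section AuxLemmas5

open SimpleGraph

variable {G : SimpleGraph V}

lemma separatesOn_symm {S : Set V} {u w : V} (h : SeparatesOn G Set.univ S u w) :
    SeparatesOn G Set.univ S w u :=
  ⟨trivial, trivial, h.2.2.2.1, h.2.2.1, h.2.2.2.2.1.symm, fun hr => h.2.2.2.2.2 (reach_symm hr)⟩

lemma full_side [DecidableEq V] {S : Set V} {u w : V} (hsep : SeparatesOn G Set.univ S u w)
    (hmin : ∀ S' ⊂ S, ¬SeparatesOn G Set.univ S' u w) {s : V} (hs : s ∈ S) :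
    ∃ y, ReachWithin G Set.univ S u y ∧ G.Adj s y := by
  by_contra hno
  push_neg at hno
  apply hmin (S \ {s}) (Set.sdiff_singleton_ssubset.mpr hs)
  refine ⟨trivial, trivial, fun h => hsep.2.2.1 h.1, fun h => hsep.2.2.2.1 h.1,
    hsep.2.2.2.2.1, ?_⟩
  rintro ⟨p, hp⟩
  by_cases hsupp : s ∈ p.support
  · have hus : u ≠ s := fun h => hsep.2.2.1 (h ▸ hs)
    set q := p.takeUntil s hsupp with hqdef
    have hcnt : q.support.count s = 1 := p.count_support_takeUntil_eq_one hsupp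
    have hqS' : ∀ v ∈ q.support, v ∉ S \ {s} :=
      fun v hv => (hp v (p.support_takeUntil_subset hsupp hv)).2
    cases hqr : q.reverse with
    | nil =>
      have hq0 : q.length = 0 := by
        have := congrArg SimpleGraph.Walk.length hqr
        simpa using this
      exact hus (SimpleGraph.Walk.eq_of_length_eq_zero hq0)
    | @cons _ y _ h' r =>
      have h1 : q.reverse.support = s :: r.support := by
        rw [hqr, SimpleGraph.Walk.support_cons]
      have hsupeq : q.support = (s :: r.support).reverse := by
        rw [← h1, SimpleGraph.Walk.support_reverse, List.reverse_reverse]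
      have hsr : s ∉ r.support := by
        have := hcnt
        rw [hsupeq, List.count_reverse, List.count_cons_self] at this
        intro hmem
        have := List.count_pos_iff.mpr hmem
        omega
      have hrS : ∀ v ∈ r.support, v ∉ S := by
        intro v hv hvS
        have hvq : v ∈ q.support := by
          rw [hsupeq, List.mem_reverse]
          exact List.mem_cons_of_mem _ hv
        have hvs : v ≠ s := fun h => hsr (h ▸ hv)
        exact hqS' v hvq ⟨hvS, hvs⟩
      refine hno y ⟨r.reverse, ?_⟩ h'
      intro v hv
      rw [SimpleGraph.Walk.support_reverse, List.mem_reverse] at hv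
      exact ⟨trivial, hrS v hv⟩
  · refine hsep.2.2.2.2.2 ⟨p, fun v hv => ⟨trivial, fun hvS => ?_⟩⟩
    have hvs : v ≠ s := fun h => hsupp (h ▸ hv)
    exact (hp v hv).2 ⟨hvS, hvs⟩

lemma comp_not_mem_S {S : Set V} {v0 z : V}
    (hz : z ∈ {z | ReachWithin G Set.univ S v0 z}) : z ∉ S := by
  obtain ⟨p, hp⟩ := hz
  exact (hp z p.end_mem_support).2

lemma comp_conn [DecidableEq V] {S : Set V} {v0 : V} :
    ∀ z ∈ {z | ReachWithin G Set.univ S v0 z}, ∀ z' ∈ {z | ReachWithin G Set.univ S v0 z},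
      ∃ p : G.Walk z z', ∀ y ∈ p.support, y ∈ {z | ReachWithin G Set.univ S v0 z} := by
  rintro z ⟨p, hp⟩ z' ⟨p', hp'⟩
  refine ⟨p.reverse.append p', ?_⟩
  intro y hy
  rcases (SimpleGraph.Walk.mem_support_append_iff _ _).mp hy with h | h
  · rw [SimpleGraph.Walk.support_reverse, List.mem_reverse] at h
    exact reach_support p (fun x hx => (hp x hx).2) y h
  · exact reach_support p' (fun x hx => (hp' x hx).2) y h

lemma comp_adj_closed {S : Set V} {v0 z y : V}
    (hz : z ∈ {z | ReachWithin G Set.univ S v0 z}) (hzy : G.Adj z y) (hyS : y ∉ S) :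
    y ∈ {z | ReachWithin G Set.univ S v0 z} := by
  refine reach_trans hz ⟨SimpleGraph.Walk.cons hzy SimpleGraph.Walk.nil, ?_⟩
  intro x hx
  simp only [SimpleGraph.Walk.support_cons, SimpleGraph.Walk.support_nil, List.mem_cons,
    List.mem_singleton, List.not_mem_nil, or_false] at hx
  rcases hx with rfl | rfl
  · exact ⟨trivial, comp_not_mem_S hz⟩
  · exact ⟨trivial, hyS⟩

end AuxLemmas5

theorem boundary_iff_sep_isMinSeparator {V : Type*} [Fintype V]
    (G : SimpleGraph V) (hconn : G.Connected) (hch : IsChordal G)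
    (hnc : ¬ CompleteOn G Set.univ) (C : Set V) (hC : IsMaxClique G C) :
    (∃ C' : Set V, IsMaxClique G C' ∧ C' ≠ C ∧ Sep G C = C ∩ C') ↔
      IsMinSeparator G (Sep G C) := by
  classical
  constructor
  · rintro ⟨C', hC', hCne, hsep⟩
    refine ⟨Set.subset_univ _, ?_⟩
    have hSimpne : (Simp G C).Nonempty := by
      rw [Set.nonempty_iff_ne_empty]
      intro h
      have hSep : Sep G C = C := by rw [Sep, h, Set.diff_empty]
      have hsub : C ⊆ C' := by
        intro y hy
        have hyi : y ∈ C ∩ C' := by rw [← hsep, hSep]; exact hy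
        exact hyi.2
      exact hCne (hC.2 C' hC'.1 hsub).symm
    obtain ⟨u, hu⟩ := hSimpne
    have hwne : (C' \ C).Nonempty := by
      rw [Set.nonempty_iff_ne_empty]
      intro h
      rw [Set.diff_eq_empty] at h
      exact hCne (hC'.2 C hC.1 h)
    obtain ⟨w, hwC', hwC⟩ := hwne
    refine ⟨u, w, ⟨trivial, trivial, fun h => h.2 hu, fun h => hwC h.1,
      fun h => hwC (h ▸ hu.1), ?_⟩, ?_⟩
    · rintro ⟨p, hp⟩
      exact hwC (walk_stays hC p hu (fun x hx => (hp x hx).2)).1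
    · intro S' hS' hsepOn
      obtain ⟨x, hxSep, hxS'⟩ := Set.exists_of_ssubset hS'
      have hxC : x ∈ C := hxSep.1
      have hxC' : x ∈ C' := by
        have hxi : x ∈ C ∩ C' := hsep ▸ hxSep
        exact hxi.2
      have hux : G.Adj u x := hC.1 hu.1 hxC (fun h => hxSep.2 (h ▸ hu))
      have hxw : G.Adj x w := hC'.1 hxC' hwC' (fun h => hwC (h ▸ hxC))
      refine hsepOn.2.2.2.2.2 ⟨SimpleGraph.Walk.cons hux (SimpleGraph.Walk.cons hxw
        SimpleGraph.Walk.nil), ?_⟩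
      intro y hy
      simp only [SimpleGraph.Walk.support_cons, SimpleGraph.Walk.support_nil, List.mem_cons,
        List.not_mem_nil, or_false] at hy
      rcases hy with rfl | rfl | rfl
      · exact ⟨trivial, fun h => (fun hh : y ∈ Sep G C => hh.2 hu) (hS'.subset h)⟩
      · exact ⟨trivial, hxS'⟩
      · exact ⟨trivial, fun h => hwC (hS'.subset h).1⟩
  · rintro ⟨-, u, w, hsep, hmin⟩
    have hSC : Sep G C ⊆ C := fun y hy => hy.1
    have hScl : G.IsClique (Sep G C) := hC.1.subset hSC
    have huS : u ∉ Sep G C := hsep.2.2.1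
    have hwS : w ∉ Sep G C := hsep.2.2.2.1
    have hdisj : ∀ z, ReachWithin G Set.univ (Sep G C) u z →
        ReachWithin G Set.univ (Sep G C) w z → False :=
      fun z h1 h2 => hsep.2.2.2.2.2 (reach_trans h1 (reach_symm h2))
    have hsep' := separatesOn_symm hsep
    have hmin' : ∀ S' ⊂ Sep G C, ¬SeparatesOn G Set.univ S' w u :=
      fun S' h hsepS' => hmin S' h (separatesOn_symm hsepS')
    have hfull_u : ∀ s ∈ Sep G C, ∃ y ∈ {z | ReachWithin G Set.univ (Sep G C) u z}, G.Adj s y :=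
      fun s hs => (full_side hsep hmin hs).imp (fun y h => ⟨h.1, h.2⟩)
    have hfull_w : ∀ s ∈ Sep G C, ∃ y ∈ {z | ReachWithin G Set.univ (Sep G C) w z}, G.Adj s y :=
      fun s hs => (full_side hsep' hmin' hs).imp (fun y h => ⟨h.1, h.2⟩)
    obtain ⟨Γ, hΓne, hΓconn, hΓS, hΓfull, hΓSimp⟩ : ∃ Γ : Set V, Γ.Nonempty ∧
        (∀ z ∈ Γ, ∀ z' ∈ Γ, ∃ p : G.Walk z z', ∀ y ∈ p.support, y ∈ Γ) ∧
        (∀ z ∈ Γ, z ∉ Sep G C) ∧ (∀ s ∈ Sep G C, ∃ y ∈ Γ, G.Adj s y) ∧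
        (∀ z ∈ Γ, z ∉ Simp G C) := by
      by_cases hcase : ∃ v ∈ Simp G C, ReachWithin G Set.univ (Sep G C) w v
      · refine ⟨{z | ReachWithin G Set.univ (Sep G C) u z}, ⟨u, reach_refl huS⟩, comp_conn,
          fun z hz => comp_not_mem_S hz, hfull_u, ?_⟩
        intro z hz hzSimp
        obtain ⟨v, hvSimp, hvΓw⟩ := hcase
        rcases eq_or_ne z v with rfl | hne
        · exact hdisj z hz hvΓw
        · exact hdisj v (comp_adj_closed hz (hC.1 hzSimp.1 hvSimp.1 hne)
            (fun h => h.2 hvSimp)) hvΓw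
      · push_neg at hcase
        refine ⟨{z | ReachWithin G Set.univ (Sep G C) w z}, ⟨w, reach_refl hwS⟩, comp_conn,
          fun z hz => comp_not_mem_S hz, hfull_w, ?_⟩
        intro z hz hzSimp
        exact hcase z hzSimp hz
    obtain ⟨x, hxΓ, hxadj⟩ := exists_adj_all hch hΓne hΓconn (Set.toFinite (Sep G C)).toFinset
      (by rw [Set.Finite.coe_toFinset]; exact hScl)
      (fun s hs hsΓ => hΓS s hsΓ ((Set.Finite.mem_toFinset _).mp hs))
      (fun s hs => hΓfull s ((Set.Finite.mem_toFinset _).mp hs))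
    have hxadj' : ∀ s ∈ Sep G C, G.Adj x s :=
      fun s hs => hxadj s ((Set.Finite.mem_toFinset _).mpr hs)
    have hclx : G.IsClique (insert x (Sep G C)) :=
      hScl.insert (fun b hb _ => hxadj' b hb)
    obtain ⟨C', hC', hsubC'⟩ := exists_maxClique_superset G hclx
    have hxC' : x ∈ C' := hsubC' (Set.mem_insert _ _)
    have hSC' : Sep G C ⊆ C' := fun y hy => hsubC' (Set.mem_insert_of_mem _ hy)
    have hxC : x ∉ C := by
      intro hxC
      by_cases h : x ∈ Simp G C
      · exact hΓSimp x hxΓ h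
      · exact hΓS x hxΓ ⟨hxC, h⟩
    refine ⟨C', hC', fun h => hxC (h ▸ hxC'), ?_⟩
    apply Set.Subset.antisymm
    · exact fun y hy => ⟨hSC hy, hSC' hy⟩
    · rintro y ⟨hyC, hyC'⟩
      by_contra hyS
      have hySimp : y ∈ Simp G C := by
        by_contra h
        exact hyS ⟨hyC, h⟩
      have hyx : y ≠ x := fun h => hxC (h ▸ hyC)
      exact hxC (simp_adj_mem hC hySimp (hC'.1 hyC' hxC' hyx))

end Chordal
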